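/- (Paley–Wiener–Schwartz, order-zero case, one direction) Suppose g is a compactly supported distribution of order zero on ℝ whose support is contained in (−∞, 0]. Then its Fourier–Laplace transform ĝ(ζ) = ⟨g, s ↦ e^{-isζ}⟩ extends to an entire function on ℂ which is uniformly bounded on the closed upper half-plane {x + iy : y ≥ 0}. -/

import Mathlib

open MeasureTheory

/-- Paley–Wiener–Schwartz, order-zero case, one direction. A compactly supported
distribution of order zero on `ℝ` is a compactly supported complex measure, modeled
here as `w dμ` with `μ` finite, `w` integrable, `μ`-support in `[a, 0]`. Its
Fourier–Laplace transform `ζ ↦ ∫ e^{-isζ} w(s) dμ(s)` is entire and uniformly bounded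
on the closed upper half-plane. -/
theorem stmt_16 (μ : Measure ℝ) [IsFiniteMeasure μ] (w : ℝ → ℂ)
    (hw : Integrable w μ) (a : ℝ) (hcompact : μ (Set.Iio a) = 0)
    (hsupp : μ (Set.Ioi 0) = 0) :
    Differentiable ℂ (fun ζ : ℂ => ∫ s, Complex.exp (-Complex.I * (s : ℂ) * ζ) * w s ∂μ)
    ∧ ∃ M : ℝ, ∀ ζ : ℂ, 0 ≤ ζ.im →
        ‖∫ s, Complex.exp (-Complex.I * (s : ℂ) * ζ) * w s ∂μ‖ ≤ M := by
  have hae : ∀ᵐ s ∂μ, s ∈ Set.Icc a 0 := by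
    refine ae_iff.2 (measure_mono_null (fun x hx => ?_) (measure_union_null hcompact hsupp))
    simp only [Set.mem_Icc, not_and_or, not_le, Set.mem_union, Set.mem_Iio, Set.mem_Ioi] at hx ⊢
    exact hx
  have hre : ∀ (s : ℝ) (ζ : ℂ), (-Complex.I * (s : ℂ) * ζ).re = s * ζ.im := by
    intro s ζ
    simp [Complex.mul_re, Complex.mul_im]
  have hnorm : ∀ (s : ℝ) (ζ : ℂ),
      ‖Complex.exp (-Complex.I * (s : ℂ) * ζ)‖ = Real.exp (s * ζ.im) := by
    intro s ζ
    rw [Complex.norm_exp, hre]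
  constructor
  · intro ζ₀
    set R : ℝ := ‖ζ₀‖ + 1 with hR
    have hkey : ∀ s ∈ Set.Icc a 0, ∀ ζ : ℂ, ‖ζ‖ ≤ R → s * ζ.im ≤ |a| * R := by
      intro s hs ζ hζ
      have h1 : |s| ≤ |a| := by
        rw [abs_le]
        constructor
        · linarith [neg_abs_le a, hs.1]
        · linarith [hs.2, abs_nonneg a]
      have h2 : |ζ.im| ≤ ‖ζ‖ := by
        exact Complex.abs_im_le_norm ζ
      calc s * ζ.im ≤ |s * ζ.im| := le_abs_self _
        _ = |s| * |ζ.im| := abs_mul _ _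
        _ ≤ |a| * R := by
            have : (0:ℝ) ≤ |ζ.im| := abs_nonneg _
            nlinarith [abs_nonneg s, abs_nonneg a]
    have hmeas : ∀ ζ : ℂ, AEStronglyMeasurable
        (fun s : ℝ => Complex.exp (-Complex.I * (s : ℂ) * ζ) * w s) μ := by
      intro ζ
      exact (Continuous.aestronglyMeasurable (by fun_prop)).mul hw.1
    have hR0 : ‖ζ₀‖ ≤ R := by simp [hR]
    have hint : Integrable (fun s : ℝ => Complex.exp (-Complex.I * (s : ℂ) * ζ₀) * w s) μ := by
      refine ((hw.norm.const_mul (Real.exp (|a| * R))).mono' (hmeas ζ₀) ?_)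
      filter_upwards [hae] with s hs
      rw [norm_mul, hnorm]
      exact mul_le_mul_of_nonneg_right (Real.exp_le_exp.mpr (hkey s hs ζ₀ hR0))
        (norm_nonneg _)
    have hmeas' : AEStronglyMeasurable
        (fun s : ℝ => (-Complex.I * (s : ℂ)) * Complex.exp (-Complex.I * (s : ℂ) * ζ₀) * w s) μ := by
      exact (Continuous.aestronglyMeasurable (by fun_prop)).mul hw.1
    have := hasDerivAt_integral_of_dominated_loc_of_deriv_le (F := fun (ζ : ℂ) (s : ℝ) =>
        Complex.exp (-Complex.I * (s : ℂ) * ζ) * w s)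
        (F' := fun (ζ : ℂ) (s : ℝ) =>
        (-Complex.I * (s : ℂ)) * Complex.exp (-Complex.I * (s : ℂ) * ζ) * w s)
        (x₀ := ζ₀) (bound := fun s => |a| * Real.exp (|a| * R) * ‖w s‖)
        (μ := μ) (s := Metric.ball ζ₀ 1) (Metric.ball_mem_nhds ζ₀ one_pos)
        (Filter.Eventually.of_forall hmeas) hint hmeas' ?_ ?_ ?_
    · exact this.2.differentiableAt
    · -- bound
      filter_upwards [hae] with s hs
      intro ζ hζ
      have hζR : ‖ζ‖ ≤ R := by
        have h := Metric.mem_ball.mp hζ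
        have h2 : ‖ζ‖ - ‖ζ₀‖ ≤ ‖ζ - ζ₀‖ := norm_sub_norm_le ζ ζ₀
        rw [dist_eq_norm] at h
        simp only [hR]
        linarith
      have h1 : |s| ≤ |a| := by
        rw [abs_le]
        constructor
        · linarith [neg_abs_le a, hs.1]
        · linarith [hs.2, abs_nonneg a]
      rw [norm_mul, norm_mul, hnorm]
      have hns : ‖-Complex.I * (s : ℂ)‖ = |s| := by
        simp [norm_mul, Complex.norm_real]
      rw [hns]
      have he : Real.exp (s * ζ.im) ≤ Real.exp (|a| * R) :=
        Real.exp_le_exp.mpr (hkey s hs ζ hζR)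
      exact mul_le_mul (mul_le_mul h1 he (Real.exp_pos _).le (abs_nonneg a)) le_rfl
        (norm_nonneg _) (by positivity)
    · exact (hw.norm.const_mul _)
    · -- differentiability in ζ
      filter_upwards with s
      intro ζ hζ
      have h : HasDerivAt (fun ζ : ℂ => Complex.exp (-Complex.I * (s : ℂ) * ζ))
          ((-Complex.I * (s : ℂ)) * Complex.exp (-Complex.I * (s : ℂ) * ζ)) ζ := by
        have := ((hasDerivAt_id ζ).const_mul (-Complex.I * (s : ℂ))).cexp
        simpa [mul_comm] using this
      simpa [mul_comm, mul_assoc] using h.mul_const (w s)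
  · refine ⟨∫ s, ‖w s‖ ∂μ, fun ζ hζ => ?_⟩
    refine norm_integral_le_of_norm_le hw.norm ?_
    filter_upwards [hae] with s hs
    rw [norm_mul, hnorm]
    have h0 : s * ζ.im ≤ 0 := mul_nonpos_of_nonpos_of_nonneg hs.2 hζ
    have h1 : Real.exp (s * ζ.im) ≤ 1 := Real.exp_le_one_iff.mpr h0
    have := norm_nonneg (w s)
    nlinarith
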